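/- Let H be a complex Hilbert space, A a bounded self-adjoint operator on H, and φ ∈ H. For Im λ > 0 define the perturbation determinant D(λ) = 1 + ⟨(A−λ)⁻¹φ, φ⟩ of the pair A, A + ⟨·, φ⟩φ, and set γ_A(λ) = 1/(1 − i(D(λ) − 1)). Then: (a) 1 − i(D(λ) − 1) does not vanish for any λ with Im λ > 0, so γ_A is well defined and analytic on the upper half-plane; (b) |γ_A(λ)| ≤ 1 for all λ with Im λ > 0; (c) γ_A(iτ) → 1 as τ → +∞; in particular γ_A is a non-zero contractive analytic function on the upper half-plane. -/

import Mathlib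

open MeasureTheory Complex Filter Topology Set ComplexConjugate

noncomputable section

variable {H : Type*} [NormedAddCommGroup H] [InnerProductSpace ℂ H] [CompleteSpace H]

/-- The perturbation determinant `D(λ) = 1 + ⟨(A−λ)⁻¹ φ, φ⟩` of the pair `A`,
`A + ⟨·, φ⟩ φ` (the inner product `⟨x, y⟩` being linear in the first argument, i.e.
`⟨x, y⟩ = ⟪y, x⟫` in Mathlib's convention). -/
def pertDet (A : H →L[ℂ] H) (φ : H) (lam : ℂ) : ℂ :=
  1 + (inner ℂ φ (Ring.inverse (A - lam • (1 : H →L[ℂ] H)) φ) : ℂ)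

/-- The function `γ_A(λ) = 1/(1 − i(D(λ) − 1))`. -/
def gammaDet (A : H →L[ℂ] H) (φ : H) (lam : ℂ) : ℂ :=
  1 / (1 - I * (pertDet A φ lam - 1))

lemma unit_aux (A : H →L[ℂ] H) (hA : IsSelfAdjoint A) {lam : ℂ} (h : 0 < lam.im) :
    IsUnit (A - lam • (1 : H →L[ℂ] H)) := by
  have hlam : lam ∉ spectrum ℂ A := by
    intro hmem
    have h1 := hA.mem_spectrum_eq_re hmem
    have h2 : lam.im = 0 := by rw [h1]; simp
    linarith
  rw [spectrum.notMem_iff] at hlam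
  have he : A - lam • (1 : H →L[ℂ] H) = -(algebraMap ℂ (H →L[ℂ] H) lam - A) := by
    rw [Algebra.algebraMap_eq_smul_one]; abel
  rw [he]; exact hlam.neg

lemma im_aux (A : H →L[ℂ] H) (hA : IsSelfAdjoint A) (φ : H) {lam : ℂ} (h : 0 < lam.im) :
    (inner ℂ φ (Ring.inverse (A - lam • (1 : H →L[ℂ] H)) φ) : ℂ).im
      = lam.im * ‖Ring.inverse (A - lam • (1 : H →L[ℂ] H)) φ‖ ^ 2 := by
  set T := A - lam • (1 : H →L[ℂ] H) with hT
  have hu := unit_aux A hA h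
  set ψ := Ring.inverse T φ with hψ
  have hφ : T ψ = φ := by
    have hc := Ring.mul_inverse_cancel T hu
    calc T ψ = (T * Ring.inverse T) φ := rfl
    _ = φ := by rw [hc]; rfl
  have h1 : (inner ℂ φ ψ : ℂ)
      = (inner ℂ (A ψ) ψ : ℂ) - (starRingEnd ℂ lam) * ((‖ψ‖ : ℂ) ^ 2) := by
    rw [← hφ, hT]
    simp [ContinuousLinearMap.sub_apply, ContinuousLinearMap.smul_apply,
      inner_sub_left, inner_smul_left, inner_self_eq_norm_sq_to_K, mul_comm]
  have h2 : (inner ℂ (A ψ) ψ : ℂ).im = 0 := by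
    have hsym : (inner ℂ (A ψ) ψ : ℂ) = (inner ℂ ψ (A ψ) : ℂ) := hA.isSymmetric ψ ψ
    have hc : (starRingEnd ℂ) (inner ℂ (A ψ) ψ : ℂ) = (inner ℂ (A ψ) ψ : ℂ) := by
      rw [inner_conj_symm, ← hsym]
    exact Complex.conj_eq_iff_im.mp hc
  have : ((‖ψ‖ : ℂ) ^ 2) = ((‖ψ‖ ^ 2 : ℝ) : ℂ) := by push_cast; ring
  rw [h1, this]
  rw [Complex.sub_im, Complex.mul_im, h2, Complex.ofReal_re, Complex.ofReal_im, Complex.conj_im]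
  ring

lemma abs_aux (A : H →L[ℂ] H) (hA : IsSelfAdjoint A) (φ : H) {lam : ℂ} (h : 0 < lam.im) :
    ‖(inner ℂ φ (Ring.inverse (A - lam • (1 : H →L[ℂ] H)) φ) : ℂ)‖
      ≤ ‖φ‖ ^ 2 / lam.im := by
  set ψ := Ring.inverse (A - lam • (1 : H →L[ℂ] H)) φ with hψ
  set w : ℂ := (inner ℂ φ ψ : ℂ) with hw
  have him : w.im = lam.im * ‖ψ‖ ^ 2 := im_aux A hA φ h
  have hcs : ‖w‖ ≤ ‖φ‖ * ‖ψ‖ := by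
    simpa using norm_inner_le_norm (𝕜 := ℂ) φ ψ
  have him_le : lam.im * ‖ψ‖ ^ 2 ≤ ‖w‖ := him ▸ Complex.im_le_norm w
  have hψle : lam.im * ‖ψ‖ ≤ ‖φ‖ := by
    rcases eq_or_lt_of_le (norm_nonneg ψ) with h0 | h0
    · rw [← h0]; simpa using norm_nonneg φ
    · nlinarith [hcs, him_le]
  calc ‖w‖ ≤ ‖φ‖ * ‖ψ‖ := hcs
  _ ≤ ‖φ‖ * (‖φ‖ / lam.im) := by
      apply mul_le_mul_of_nonneg_left _ (norm_nonneg φ)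
      rw [le_div_iff₀ h]
      linarith
  _ = ‖φ‖ ^ 2 / lam.im := by ring

lemma denom_re (A : H →L[ℂ] H) (hA : IsSelfAdjoint A) (φ : H) {lam : ℂ} (h : 0 < lam.im) :
    1 ≤ (1 - I * (pertDet A φ lam - 1)).re := by
  have him : (pertDet A φ lam - 1).im
      = lam.im * ‖Ring.inverse (A - lam • (1 : H →L[ℂ] H)) φ‖ ^ 2 := by
    simp only [pertDet, add_sub_cancel_left]
    exact im_aux A hA φ h
  have hge : 0 ≤ (pertDet A φ lam - 1).im := by
    rw [him]; positivity
  simp only [Complex.sub_re, Complex.one_re, Complex.mul_re, Complex.I_re, Complex.I_im]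
  nlinarith

lemma denom_ne (A : H →L[ℂ] H) (hA : IsSelfAdjoint A) (φ : H) {lam : ℂ} (h : 0 < lam.im) :
    1 - I * (pertDet A φ lam - 1) ≠ 0 := by
  intro h0
  have := denom_re A hA φ (lam := lam) h
  rw [h0] at this
  simp at this
  linarith

/-- For a bounded self-adjoint operator `A` and `φ ∈ H`, with
`D(λ) = 1 + ⟨(A−λ)⁻¹φ, φ⟩` and `γ_A(λ) = 1/(1 − i(D(λ) − 1))`:
(a) `A − λ` is invertible and `1 − i(D(λ) − 1) ≠ 0` for `Im λ > 0`, and `γ_A` is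
analytic on `ℂ₊`; (b) `|γ_A(λ)| ≤ 1` on `ℂ₊`; (c) `γ_A(iτ) → 1` as `τ → +∞`;
in particular `γ_A` is a non-zero contractive analytic function on `ℂ₊`. -/
theorem gammaDet_wellDefined_contractive_tendsto_one
    (A : H →L[ℂ] H) (hA : IsSelfAdjoint A) (φ : H) :
    (∀ lam : ℂ, 0 < lam.im → IsUnit (A - lam • (1 : H →L[ℂ] H))) ∧
    (∀ lam : ℂ, 0 < lam.im → 1 - I * (pertDet A φ lam - 1) ≠ 0) ∧
    DifferentiableOn ℂ (gammaDet A φ) {z : ℂ | 0 < z.im} ∧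
    (∀ lam : ℂ, 0 < lam.im → ‖gammaDet A φ lam‖ ≤ 1) ∧
    Tendsto (fun τ : ℝ => gammaDet A φ ((τ : ℂ) * I)) atTop (𝓝 1) := by
  have hdiff : DifferentiableOn ℂ (gammaDet A φ) {z : ℂ | 0 < z.im} := by
    have h1 : DifferentiableOn ℂ (fun lam : ℂ => A - lam • (1 : H →L[ℂ] H))
        {z : ℂ | 0 < z.im} :=
      (differentiableOn_const A).sub (differentiable_id.smul_const _).differentiableOn
    have h2 : DifferentiableOn ℂ (fun lam : ℂ => Ring.inverse (A - lam • (1 : H →L[ℂ] H)))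
        {z : ℂ | 0 < z.im} :=
      h1.inverse fun z hz => unit_aux A hA hz
    have h3 : DifferentiableOn ℂ (fun lam : ℂ => Ring.inverse (A - lam • (1 : H →L[ℂ] H)) φ)
        {z : ℂ | 0 < z.im} :=
      h2.clm_apply (differentiableOn_const φ)
    have h4 : DifferentiableOn ℂ
        (fun lam : ℂ => (inner ℂ φ (Ring.inverse (A - lam • (1 : H →L[ℂ] H)) φ) : ℂ))
        {z : ℂ | 0 < z.im} := by
      have := (innerSL ℂ φ).differentiable.comp_differentiableOn h3
      exact this
    have hP : DifferentiableOn ℂ (pertDet A φ) {z : ℂ | 0 < z.im} :=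
      (differentiableOn_const (1 : ℂ)).add h4
    have hden : DifferentiableOn ℂ (fun lam : ℂ => 1 - I * (pertDet A φ lam - 1))
        {z : ℂ | 0 < z.im} :=
      (differentiableOn_const _).sub
        ((differentiableOn_const I).mul (hP.sub (differentiableOn_const 1)))
    exact (differentiableOn_const 1).div hden fun z hz => denom_ne A hA φ hz
  have hb : ∀ lam : ℂ, 0 < lam.im → ‖gammaDet A φ lam‖ ≤ 1 := by
    intro lam h
    have habs : 1 ≤ ‖1 - I * (pertDet A φ lam - 1)‖ :=
      le_trans (le_trans (denom_re A hA φ h) (le_abs_self _)) (Complex.abs_re_le_norm _)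
    rw [gammaDet, norm_div, norm_one, div_le_one (lt_of_lt_of_le one_pos habs)]
    exact habs
  have hw : Tendsto
      (fun τ : ℝ => (inner ℂ φ (Ring.inverse (A - ((τ : ℂ) * I) • (1 : H →L[ℂ] H)) φ) : ℂ))
      atTop (𝓝 0) := by
    apply squeeze_zero_norm' (a := fun τ : ℝ => ‖φ‖ ^ 2 / τ)
    · filter_upwards [eventually_gt_atTop (0 : ℝ)] with τ hτ
      have him : 0 < ((τ : ℂ) * I).im := by simpa using hτ
      have := abs_aux A hA φ him
      simpa using this
    · exact Tendsto.div_atTop tendsto_const_nhds tendsto_id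
  have htend : Tendsto (fun τ : ℝ => gammaDet A φ ((τ : ℂ) * I)) atTop (𝓝 1) := by
    have h0 : Tendsto (fun τ : ℝ => pertDet A φ ((τ : ℂ) * I) - 1) atTop (𝓝 0) := by
      simpa [pertDet] using hw
    have hden1 : Tendsto (fun τ : ℝ => 1 - I * (pertDet A φ ((τ : ℂ) * I) - 1)) atTop
        (𝓝 1) := by
      have h2 := (tendsto_const_nhds (x := I) (f := atTop)).mul h0
      simpa using (tendsto_const_nhds (x := (1 : ℂ)) (f := atTop)).sub h2
    have hfin := (tendsto_const_nhds (x := (1 : ℂ)) (f := atTop)).div hden1 one_ne_zero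
    rw [div_one] at hfin
    exact Tendsto.congr (fun τ => by simp [gammaDet]) hfin
  exact ⟨fun lam h => unit_aux A hA h, fun lam h => denom_ne A hA φ h, hdiff, hb, htend⟩
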